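/- Let a := arccos(1/4) and U(x,y) := 3 − sin y − 2·cos(x − y − 4·cos(y − a)) for (x,y) ∈ ℝ². Then both partial derivatives ∂U/∂x(x,y) and ∂U/∂y(x,y) vanish simultaneously if and only if there exist integers k, l such that (x,y) = p + (2πk, 2πl) for some p ∈ { (π/2 + √15, π/2), (5π/2 − √15, 3π/2), (3π/2 − √15, 3π/2), (√15 − π/2, π/2) }. In other words, modulo the lattice 2πℤ², the 2π-biperiodic function U has exactly four critical points: v = (π/2 + √15, π/2), m = (5π/2 − √15, 3π/2), s₁ = (3π/2 − √15, 3π/2), s₂ = (√15 − π/2, π/2). -/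

import Mathlib

open Real

/-- The angle `a = arccos(1/4)` from the paper's negative-resistance example. -/
noncomputable def aconst : ℝ := Real.arccos (1 / 4)

/-- The potential `U(x,y) = 3 − sin y − 2·cos(x − y − 4·cos(y − a))` of the paper's
negative-resistance example on the flat 2-torus. -/
noncomputable def Upot (x y : ℝ) : ℝ :=
  3 - Real.sin y - 2 * Real.cos (x - y - 4 * Real.cos (y - aconst))

lemma sin_aconst : Real.sin aconst = Real.sqrt 15 / 4 := by
  rw [aconst, Real.sin_arccos, show (1:ℝ) - (1/4)^2 = 15/16 by norm_num,
    Real.sqrt_div (by norm_num : (0:ℝ) ≤ 15),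
    show Real.sqrt 16 = 4 by rw [show (16:ℝ) = 4^2 by norm_num, Real.sqrt_sq (by norm_num)]]

lemma cosA1 (l : ℤ) : Real.cos ((π/2 + 2*π*l) - aconst) = Real.sqrt 15 / 4 := by
  rw [show (π/2 + 2*π*l) - aconst = (π/2 - aconst) + l * (2*π) by ring,
    Real.cos_add_int_mul_two_pi, Real.cos_pi_div_two_sub, sin_aconst]

lemma cosA2 (l : ℤ) : Real.cos ((3*π/2 + 2*π*l) - aconst) = -(Real.sqrt 15 / 4) := by
  rw [show (3*π/2 + 2*π*l) - aconst = ((π/2 - aconst) + π) + l * (2*π) by ring,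
    Real.cos_add_int_mul_two_pi, Real.cos_add_pi, Real.cos_pi_div_two_sub, sin_aconst]

lemma cosy1 (l : ℤ) : Real.cos (π/2 + 2*π*l) = 0 := by
  rw [show π/2 + 2*π*l = π/2 + l * (2*π) by ring, Real.cos_add_int_mul_two_pi,
    Real.cos_pi_div_two]

lemma cosy2 (l : ℤ) : Real.cos (3*π/2 + 2*π*l) = 0 := by
  rw [show 3*π/2 + 2*π*l = (π/2 + π) + l * (2*π) by ring, Real.cos_add_int_mul_two_pi,
    Real.cos_add_pi, Real.cos_pi_div_two, neg_zero]

lemma sin_int (n : ℤ) (t : ℝ) (h : t = n * π) : Real.sin t = 0 := by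
  rw [h, Real.sin_int_mul_pi]

lemma crit_iff (x y : ℝ) :
    (Real.sin (x - y - 4 * Real.cos (y - aconst)) = 0 ∧ Real.cos y = 0) ↔
      ∃ p ∈ ({(π / 2 + Real.sqrt 15, π / 2),
              (5 * π / 2 - Real.sqrt 15, 3 * π / 2),
              (3 * π / 2 - Real.sqrt 15, 3 * π / 2),
              (Real.sqrt 15 - π / 2, π / 2)} : Set (ℝ × ℝ)),
        ∃ k l : ℤ, x = p.1 + 2 * π * k ∧ y = p.2 + 2 * π * l := by
  constructor
  · rintro ⟨hs, hc⟩
    obtain ⟨k, hk⟩ := Real.cos_eq_zero_iff.mp hc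
    rcases Int.even_or_odd k with ⟨l, hl⟩ | ⟨l, hl⟩
    · -- y = π/2 + 2πl
      have hy : y = π/2 + 2*π*l := by rw [hk, hl]; push_cast; ring
      rw [hy, cosA1 l] at hs
      obtain ⟨n, hn⟩ := Real.sin_eq_zero_iff.mp hs
      rcases Int.even_or_odd n with ⟨m, hm⟩ | ⟨m, hm⟩
      · refine ⟨(π / 2 + Real.sqrt 15, π / 2), by simp, m + l, l, ?_, ?_⟩
        · rw [hm] at hn; push_cast at hn ⊢; linear_combination -hn
        · simpa using hy
      · refine ⟨(Real.sqrt 15 - π / 2, π / 2), by simp, m + l + 1, l, ?_, ?_⟩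
        · rw [hm] at hn; push_cast at hn ⊢; linear_combination -hn
        · simpa using hy
    · -- y = 3π/2 + 2πl
      have hy : y = 3*π/2 + 2*π*l := by rw [hk, hl]; push_cast; ring
      rw [hy, cosA2 l] at hs
      obtain ⟨n, hn⟩ := Real.sin_eq_zero_iff.mp hs
      rcases Int.even_or_odd n with ⟨m, hm⟩ | ⟨m, hm⟩
      · refine ⟨(3 * π / 2 - Real.sqrt 15, 3 * π / 2), by simp, m + l, l, ?_, ?_⟩
        · rw [hm] at hn; push_cast at hn ⊢; linear_combination -hn
        · simpa using hy
      · refine ⟨(5 * π / 2 - Real.sqrt 15, 3 * π / 2), by simp, m + l, l, ?_, ?_⟩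
        · rw [hm] at hn; push_cast at hn ⊢; linear_combination -hn
        · simpa using hy
  · rintro ⟨p, hp, k, l, hx, hy⟩
    simp only [Set.mem_insert_iff, Set.mem_singleton_iff] at hp
    rcases hp with rfl | rfl | rfl | rfl <;> simp only at hx hy <;> subst hx <;> subst hy
    · refine ⟨?_, cosy1 l⟩
      rw [cosA1 l]
      exact sin_int (2*(k-l)) _ (by push_cast; ring)
    · refine ⟨?_, cosy2 l⟩
      rw [cosA2 l]
      exact sin_int (2*(k-l)+1) _ (by push_cast; ring)
    · refine ⟨?_, cosy2 l⟩
      rw [cosA2 l]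
      exact sin_int (2*(k-l)) _ (by push_cast; ring)
    · refine ⟨?_, cosy1 l⟩
      rw [cosA1 l]
      exact sin_int (2*(k-l)-1) _ (by push_cast; ring)


lemma derivX (x y : ℝ) :
    deriv (fun x' => Upot x' y) x = 2 * Real.sin (x - y - 4 * Real.cos (y - aconst)) := by
  have h1 : HasDerivAt (fun x' : ℝ => x' - (y + 4 * Real.cos (y - aconst))) 1 x :=
    (hasDerivAt_id x).sub_const _
  have h2 := (Real.hasDerivAt_cos _).comp x h1
  have h3 := ((h2.const_mul (2:ℝ)).const_sub (3 - Real.sin y))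
  have h4 : HasDerivAt (fun x' => Upot x' y)
      (2 * Real.sin (x - y - 4 * Real.cos (y - aconst))) x := by
    convert h3 using 1
    all_goals first
      | (funext x'; simp only [Upot, Function.comp, Function.comp_apply]; ring_nf)
      | ring
      | rfl
      | (simp only [sub_sub]; ring)
  rw [h4.deriv]

lemma derivY (x y : ℝ) :
    deriv (fun y' => Upot x y') y =
      (4 * Real.sin (y - aconst) - 1) * (2 * Real.sin (x - y - 4 * Real.cos (y - aconst)))
        - Real.cos y := by
  have hg : HasDerivAt (fun y' : ℝ => x - y' - 4 * Real.cos (y' - aconst))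
      (-1 - 4 * (-Real.sin (y - aconst))) y := by
    have h1 : HasDerivAt (fun y' : ℝ => x - y') (-1) y := by
      simpa using (hasDerivAt_id y).const_sub x
    have h2 : HasDerivAt (fun y' : ℝ => Real.cos (y' - aconst)) (-Real.sin (y - aconst)) y := by
      simpa [Function.comp_def] using (Real.hasDerivAt_cos (y - aconst)).comp y ((hasDerivAt_id y).sub_const aconst)
    exact h1.sub (h2.const_mul 4)
  have h2 := (Real.hasDerivAt_cos _).comp y hg
  have hs : HasDerivAt Real.sin (Real.cos y) y := Real.hasDerivAt_sin y
  have h3 := (hs.const_sub 3).sub (h2.const_mul 2)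
  have h4 : HasDerivAt (fun y' => Upot x y')
      ((4 * Real.sin (y - aconst) - 1) * (2 * Real.sin (x - y - 4 * Real.cos (y - aconst)))
        - Real.cos y) y := by
    convert h3 using 1
    all_goals first
      | (funext y'; simp only [Upot, Function.comp, Function.comp_apply, Pi.sub_apply])
      | ring
      | rfl
      | (simp only [sub_sub]; ring)
  rw [h4.deriv]

/-- The 2π-biperiodic potential `U` has, modulo the lattice `2πℤ²`,
exactly four critical points: `v = (π/2 + √15, π/2)`, `m = (5π/2 − √15, 3π/2)`,
`s₁ = (3π/2 − √15, 3π/2)`, `s₂ = (√15 − π/2, π/2)`. -/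
theorem Upot_critical_points (x y : ℝ) :
    (deriv (fun x' => Upot x' y) x = 0 ∧ deriv (fun y' => Upot x y') y = 0) ↔
      ∃ p ∈ ({(π / 2 + Real.sqrt 15, π / 2),
              (5 * π / 2 - Real.sqrt 15, 3 * π / 2),
              (3 * π / 2 - Real.sqrt 15, 3 * π / 2),
              (Real.sqrt 15 - π / 2, π / 2)} : Set (ℝ × ℝ)),
        ∃ k l : ℤ, x = p.1 + 2 * π * k ∧ y = p.2 + 2 * π * l := by
  rw [derivX, derivY, ← crit_iff x y]
  constructor
  · rintro ⟨h1, h2⟩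
    have hs : Real.sin (x - y - 4 * Real.cos (y - aconst)) = 0 := by linarith
    rw [hs] at h2
    exact ⟨hs, by linarith⟩
  · rintro ⟨hs, hc⟩
    rw [hs, hc]
    constructor <;> ring
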